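/- If μ is a Radon measure on ℝ with non-empty support, then there exists a point x ∈ spt μ such that L ∉ Tan(μ,x) or L⁺ ∉ Tan(μ,x), where L is Lebesgue measure on ℝ and L⁺ = L⌞[0,∞) is the Heaviside measure. -/

import Mathlib

open MeasureTheory Filter Topology Metric Set

noncomputable section

/-- Weak convergence of a sequence of Radon measures on ℝ, tested against
continuous compactly supported functions. -/
def WeakTendstoR (μs : ℕ → Measure ℝ) (ν : Measure ℝ) : Prop :=
  ∀ φ : ℝ → ℝ, Continuous φ → HasCompactSupport φ →
    Tendsto (fun i => ∫ x, φ x ∂(μs i)) atTop (𝓝 (∫ x, φ x ∂ν))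

/-- The measure `c • T_{x,r♯} μ`, where `T_{x,r♯}μ(A) = μ(rA + x)`. -/
def blowupR (μ : Measure ℝ) (x r c : ℝ) : Measure ℝ :=
  ENNReal.ofReal c • Measure.map (fun y => (y - x) / r) μ

/-- `ν` is a tangent measure of `μ` at `x`: `ν` is a non-zero Radon measure and
`c_i T_{x,r_i♯}μ → ν` weakly for some `r_i ↘ 0`, `c_i > 0`. -/
def IsTangentMeasureR (μ : Measure ℝ) (x : ℝ) (ν : Measure ℝ) : Prop :=
  IsLocallyFiniteMeasure ν ∧ ν ≠ 0 ∧
    ∃ r c : ℕ → ℝ, (∀ i, 0 < r i) ∧ StrictAnti r ∧ Tendsto r atTop (𝓝 0) ∧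
      (∀ i, 0 < c i) ∧ WeakTendstoR (fun i => blowupR μ x (r i) (c i)) ν

/-- The support of a measure on ℝ. -/
def sptR (μ : Measure ℝ) : Set ℝ := {x | ∀ r > 0, 0 < μ (closedBall x r)}

/-- The Heaviside measure `L⁺ = L ⌞ [0,∞)`. -/
def heaviside : Measure ℝ := volume.restrict (Ici 0)

section AuxiliaryLemmas
/-- Trapezoidal test function: 0 outside [a,d], 1 on [b,c], linear in between. -/
def trap (a b c d : ℝ) : ℝ → ℝ := fun t =>
  max 0 (min 1 (min ((t - a) / (b - a)) ((d - t) / (d - c))))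

lemma trap_continuous (a b c d : ℝ) : Continuous (trap a b c d) := by
  unfold trap
  fun_prop

lemma trap_nonneg (a b c d t : ℝ) : 0 ≤ trap a b c d t := le_max_left _ _

lemma trap_le_one (a b c d t : ℝ) : trap a b c d t ≤ 1 :=
  max_le zero_le_one (min_le_left _ _)

lemma trap_eq_zero {a b c d t : ℝ} (hab : a < b) (hcd : c < d) (h : t ∉ Icc a d) :
    trap a b c d t = 0 := by
  rcases not_and_or.1 h with h' | h'
  · push_neg at h'
    have : (t - a) / (b - a) < 0 :=
      div_neg_of_neg_of_pos (by linarith) (by linarith)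
    have hm : min ((t - a) / (b - a)) ((d - t) / (d - c)) < 0 :=
      lt_of_le_of_lt (min_le_left _ _) this
    have : min 1 (min ((t - a) / (b - a)) ((d - t) / (d - c))) < 0 :=
      lt_of_le_of_lt (min_le_right _ _) hm
    exact max_eq_left this.le
  · push_neg at h'
    have : (d - t) / (d - c) < 0 :=
      div_neg_of_neg_of_pos (by linarith) (by linarith)
    have hm : min ((t - a) / (b - a)) ((d - t) / (d - c)) < 0 :=
      lt_of_le_of_lt (min_le_right _ _) this
    have : min 1 (min ((t - a) / (b - a)) ((d - t) / (d - c))) < 0 :=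
      lt_of_le_of_lt (min_le_right _ _) hm
    exact max_eq_left this.le

lemma trap_eq_one {a b c d t : ℝ} (hab : a < b) (hcd : c < d) (h : t ∈ Icc b c) :
    trap a b c d t = 1 := by
  have h1 : (1 : ℝ) ≤ (t - a) / (b - a) := by
    rw [le_div_iff₀ (by linarith)]
    have := h.1; linarith
  have h2 : (1 : ℝ) ≤ (d - t) / (d - c) := by
    rw [le_div_iff₀ (by linarith)]
    have := h.2; linarith
  unfold trap
  rw [min_eq_left (le_min h1 h2), max_eq_right zero_le_one]

/-- Integral of a test function bounded above by the measure of its support interval. -/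
lemma int_le_measure (ν : Measure ℝ) [IsFiniteMeasureOnCompacts ν] {f : ℝ → ℝ} {p q : ℝ}
    (hc : Continuous f) (h0 : ∀ t, 0 ≤ f t) (h1 : ∀ t, f t ≤ 1)
    (hsupp : ∀ t, t ∉ Icc p q → f t = 0) :
    ∫ t, f t ∂ν ≤ (ν (Icc p q)).toReal := by
  have hcs : HasCompactSupport f := HasCompactSupport.intro isCompact_Icc hsupp
  have hint : Integrable f ν := hc.integrable_of_hasCompactSupport hcs
  have hind : Integrable ((Icc p q).indicator fun _ => (1 : ℝ)) ν :=
    (integrable_indicator_iff measurableSet_Icc).2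
      (integrableOn_const (IsCompact.measure_lt_top isCompact_Icc).ne)
  have hle : ∀ t, f t ≤ (Icc p q).indicator (fun _ => (1 : ℝ)) t := by
    intro t
    by_cases ht : t ∈ Icc p q
    · rw [indicator_of_mem ht]; exact h1 t
    · rw [indicator_of_notMem ht, hsupp t ht]
  calc ∫ t, f t ∂ν ≤ ∫ t, (Icc p q).indicator (fun _ => (1 : ℝ)) t ∂ν :=
        integral_mono hint hind hle
    _ = (ν (Icc p q)).toReal := by
        rw [integral_indicator_const _ measurableSet_Icc]; simp [Measure.real]

/-- Integral of a test function bounded below by the measure of the set where it is 1. -/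
lemma measure_le_int (ν : Measure ℝ) [IsFiniteMeasureOnCompacts ν] {f : ℝ → ℝ} {m M p q : ℝ}
    (hc : Continuous f) (h0 : ∀ t, 0 ≤ f t) (h1 : ∀ t ∈ Icc m M, f t = 1)
    (hsupp : ∀ t, t ∉ Icc p q → f t = 0) :
    (ν (Icc m M)).toReal ≤ ∫ t, f t ∂ν := by
  have hcs : HasCompactSupport f := HasCompactSupport.intro isCompact_Icc hsupp
  have hint : Integrable f ν := hc.integrable_of_hasCompactSupport hcs
  have hind : Integrable ((Icc m M).indicator fun _ => (1 : ℝ)) ν :=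
    (integrable_indicator_iff measurableSet_Icc).2
      (integrableOn_const (IsCompact.measure_lt_top isCompact_Icc).ne)
  have hle : ∀ t, (Icc m M).indicator (fun _ => (1 : ℝ)) t ≤ f t := by
    intro t
    by_cases ht : t ∈ Icc m M
    · rw [indicator_of_mem ht, h1 t ht]
    · rw [indicator_of_notMem ht]; exact h0 t
  calc (ν (Icc m M)).toReal = ∫ t, (Icc m M).indicator (fun _ => (1 : ℝ)) t ∂ν := by
        rw [integral_indicator_const _ measurableSet_Icc]; simp [Measure.real]
    _ ≤ ∫ t, f t ∂ν := integral_mono hind hint hle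

instance : IsFiniteMeasureOnCompacts heaviside := by
  constructor
  intro K hK
  calc heaviside K ≤ volume K := Measure.restrict_le_self K
    _ < ⊤ := hK.measure_lt_top

lemma integral_blowup (μ : Measure ℝ) {x r c : ℝ} (hc : 0 < c) (f : ℝ → ℝ)
    (hf : Continuous f) :
    ∫ t, f t ∂(blowupR μ x r c) = c * ∫ y, f ((y - x) / r) ∂μ := by
  unfold blowupR
  rw [integral_smul_measure,
    integral_map (by fun_prop : AEMeasurable (fun y : ℝ => (y - x) / r) μ)
      hf.aestronglyMeasurable,
    ENNReal.toReal_ofReal hc.le]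
  simp

lemma mem_scale_iff {x r α β y : ℝ} (hr : 0 < r) :
    (y - x) / r ∈ Icc α β ↔ y ∈ Icc (x + α * r) (x + β * r) := by
  constructor
  · rintro ⟨h1, h2⟩
    rw [le_div_iff₀ hr] at h1
    rw [div_le_iff₀ hr] at h2
    constructor <;> linarith
  · rintro ⟨h1, h2⟩
    constructor
    · rw [le_div_iff₀ hr]; linarith
    · rw [div_le_iff₀ hr]; linarith

/-- Upper bound for a scaled test integral. -/
lemma scaled_int_le (μ : Measure ℝ) [IsFiniteMeasureOnCompacts μ] {ψ : ℝ → ℝ} {α β x r : ℝ}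
    (hr : 0 < r) (hc : Continuous ψ) (h0 : ∀ t, 0 ≤ ψ t) (h1 : ∀ t, ψ t ≤ 1)
    (hsupp : ∀ t, t ∉ Icc α β → ψ t = 0) :
    ∫ y, ψ ((y - x) / r) ∂μ ≤ (μ (Icc (x + α * r) (x + β * r))).toReal := by
  apply int_le_measure μ (by fun_prop) (fun t => h0 _) (fun t => h1 _)
  intro y hy
  apply hsupp
  rw [mem_scale_iff hr]
  exact hy

lemma scaled_measure_le_int (μ : Measure ℝ) [IsFiniteMeasureOnCompacts μ]
    {ψ : ℝ → ℝ} {α β m M x r : ℝ}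
    (hr : 0 < r) (hc : Continuous ψ) (h0 : ∀ t, 0 ≤ ψ t)
    (h1 : ∀ t, t ∈ Icc m M → ψ t = 1)
    (hsupp : ∀ t, t ∉ Icc α β → ψ t = 0) :
    (μ (Icc (x + m * r) (x + M * r))).toReal ≤ ∫ y, ψ ((y - x) / r) ∂μ := by
  apply measure_le_int μ (p := x + α * r) (q := x + β * r)
    (f := fun y => ψ ((y - x) / r)) (by fun_prop) (fun t => h0 _)
  · intro t ht
    exact h1 _ ((mem_scale_iff hr).2 ht)
  · intro y hy
    apply hsupp
    rw [mem_scale_iff hr]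
    exact hy

lemma scaled_int_zero (μ : Measure ℝ) {ψ : ℝ → ℝ} {α β x r : ℝ}
    (hr : 0 < r) (hsupp : ∀ t, t ∉ Icc α β → ψ t = 0)
    (hnull : μ (Icc (x + α * r) (x + β * r)) = 0) :
    ∫ y, ψ ((y - x) / r) ∂μ = 0 := by
  apply integral_eq_zero_of_ae
  rw [Filter.EventuallyEq, ae_iff]
  apply measure_mono_null _ hnull
  intro y hy
  simp only [mem_setOf_eq] at hy
  by_contra hmem
  exact hy (hsupp _ (fun h => hmem ((mem_scale_iff hr).1 h)))
lemma heaviside_Icc {u v : ℝ} (hu : 0 ≤ u) : heaviside (Icc u v) = ENNReal.ofReal (v - u) := by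
  unfold heaviside
  have hsub : Icc u v ∩ Ici 0 = Icc u v :=
    inter_eq_left.2 (fun t ht => le_trans hu ht.1)
  rw [Measure.restrict_apply measurableSet_Icc, hsub, Real.volume_Icc]

lemma heaviside_Icc_neg {u v : ℝ} (hv : v < 0) : heaviside (Icc u v) = 0 := by
  unfold heaviside
  rw [Measure.restrict_apply measurableSet_Icc]
  convert measure_empty
  · ext t
    simp only [mem_inter_iff, mem_Icc, mem_Ici, mem_empty_iff_false, iff_false]
    rintro ⟨⟨_, h2⟩, h3⟩
    linarith
  · infer_instance

/-- If `μ` vanishes on a left punctured neighborhood of `x`, then `volume` is not a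
tangent measure of `μ` at `x`. -/
lemma notTan_volume_of_left_gap (μ : Measure ℝ) (hRadon : IsLocallyFiniteMeasure μ)
    {x r₀ : ℝ} (hr₀ : 0 < r₀) (hnull : μ (Ioo (x - r₀) x) = 0) :
    ¬ IsTangentMeasureR μ x volume := by
  haveI := hRadon
  rintro ⟨-, -, r, c, hrpos, -, hr0, hcpos, hw⟩
  set ψ := trap (-1) (-(3/4)) (-(1/2)) (-(1/4)) with hψ
  have hcont : Continuous ψ := trap_continuous _ _ _ _
  have hsupp : ∀ t, t ∉ Icc (-1 : ℝ) (-(1/4)) → ψ t = 0 :=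
    fun t ht => trap_eq_zero (by norm_num) (by norm_num) ht
  have hcs : HasCompactSupport ψ := HasCompactSupport.intro isCompact_Icc hsupp
  have hws := hw ψ hcont hcs
  have hev : ∀ᶠ i in atTop, (∫ t, ψ t ∂(blowupR μ x (r i) (c i))) = 0 := by
    filter_upwards [hr0.eventually (gt_mem_nhds hr₀)] with i hi
    rw [integral_blowup μ (hcpos i) ψ hcont]
    rw [scaled_int_zero μ (hrpos i) hsupp, mul_zero]
    apply measure_mono_null _ hnull
    intro y hy
    have h1 := hy.1
    have h2 := hy.2
    have hrp := hrpos i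
    constructor <;> nlinarith
  have h0 : Tendsto (fun i => ∫ t, ψ t ∂(blowupR μ x (r i) (c i))) atTop (𝓝 0) := by
    exact Tendsto.congr' (hev.mono fun i h => h.symm) tendsto_const_nhds
  have hlim : (∫ t, ψ t ∂(volume : Measure ℝ)) = 0 := tendsto_nhds_unique hws h0
  have hge : (volume (Icc (-(3/4) : ℝ) (-(1/2)))).toReal ≤ ∫ t, ψ t ∂(volume : Measure ℝ) := by
    apply measure_le_int _ hcont (trap_nonneg _ _ _ _)
      (fun t ht => trap_eq_one (by norm_num) (by norm_num) ht) hsupp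
  rw [Real.volume_Icc, hlim] at hge
  have : (ENNReal.ofReal (-(1/2) - -(3/4))).toReal = 1/4 := by
    rw [ENNReal.toReal_ofReal (by norm_num)]; norm_num
  rw [this] at hge
  linarith

/-- If `μ` vanishes on a right punctured neighborhood of `x`, then `heaviside` is not a
tangent measure of `μ` at `x`. -/
lemma notTan_heaviside_of_right_gap (μ : Measure ℝ) (hRadon : IsLocallyFiniteMeasure μ)
    {x r₀ : ℝ} (hr₀ : 0 < r₀) (hnull : μ (Ioo x (x + r₀)) = 0) :
    ¬ IsTangentMeasureR μ x heaviside := by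
  haveI := hRadon
  rintro ⟨-, -, r, c, hrpos, -, hr0, hcpos, hw⟩
  set ψ := trap (1/4) (1/2) (3/4) 1 with hψ
  have hcont : Continuous ψ := trap_continuous _ _ _ _
  have hsupp : ∀ t, t ∉ Icc (1/4 : ℝ) 1 → ψ t = 0 :=
    fun t ht => trap_eq_zero (by norm_num) (by norm_num) ht
  have hcs : HasCompactSupport ψ := HasCompactSupport.intro isCompact_Icc hsupp
  have hws := hw ψ hcont hcs
  have hev : ∀ᶠ i in atTop, (∫ t, ψ t ∂(blowupR μ x (r i) (c i))) = 0 := by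
    filter_upwards [hr0.eventually (gt_mem_nhds hr₀)] with i hi
    rw [integral_blowup μ (hcpos i) ψ hcont]
    rw [scaled_int_zero μ (hrpos i) hsupp, mul_zero]
    apply measure_mono_null _ hnull
    intro y hy
    have h1 := hy.1
    have h2 := hy.2
    have hrp := hrpos i
    constructor <;> nlinarith
  have h0 : Tendsto (fun i => ∫ t, ψ t ∂(blowupR μ x (r i) (c i))) atTop (𝓝 0) := by
    exact Tendsto.congr' (hev.mono fun i h => h.symm) tendsto_const_nhds
  have hlim : (∫ t, ψ t ∂heaviside) = 0 := tendsto_nhds_unique hws h0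
  have hge : (heaviside (Icc (1/2 : ℝ) (3/4))).toReal ≤ ∫ t, ψ t ∂heaviside := by
    apply measure_le_int _ hcont (trap_nonneg _ _ _ _)
      (fun t ht => trap_eq_one (by norm_num) (by norm_num) ht) hsupp
  rw [heaviside_Icc (by norm_num), hlim] at hge
  have : (ENNReal.ofReal ((3:ℝ)/4 - 1/2)).toReal = 1/4 := by
    rw [ENNReal.toReal_ofReal (by norm_num)]; norm_num
  rw [this] at hge
  linarith
lemma heaviside_Icc_cross {u v : ℝ} (hu : u ≤ 0) :
    heaviside (Icc u v) = ENNReal.ofReal v := by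
  unfold heaviside
  have hsub : Icc u v ∩ Ici 0 = Icc 0 v := by
    ext t
    simp only [mem_inter_iff, mem_Icc, mem_Ici]
    constructor
    · rintro ⟨⟨-, h2⟩, h3⟩; exact ⟨h3, h2⟩
    · rintro ⟨h1, h2⟩; exact ⟨⟨le_trans hu h1, h2⟩, h1⟩
  rw [Measure.restrict_apply measurableSet_Icc, hsub, Real.volume_Icc, sub_zero]

/-- Main analytic lemma: if near `x` the measure of left intervals dominates `c₁ r` while
right intervals are bounded by `c₂ r`, then `heaviside` is not tangent at `x`. -/
lemma notTan_heaviside_main (μ : Measure ℝ) (hRadon : IsLocallyFiniteMeasure μ)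
    {x r₀ c₁ c₂ : ℝ} (hr₀ : 0 < r₀) (hc₁ : 0 < c₁) (hc₂ : 0 < c₂)
    (hL : ∀ r, 0 < r → r ≤ r₀ → c₁ * r ≤ (μ (Ioc (x - r) x)).toReal)
    (hR : ∀ r, 0 < r → r ≤ r₀ → (μ (Ioc x (x + r))).toReal ≤ c₂ * r) :
    ¬ IsTangentMeasureR μ x heaviside := by
  haveI := hRadon
  set δ := c₁ / (4 * c₁ + 4 * c₂) with hδdef
  have hδpos : 0 < δ := div_pos hc₁ (by linarith)
  have hδeq : δ * (4 * c₁ + 4 * c₂) = c₁ := div_mul_cancel₀ _ (by positivity)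
  have hδ4 : δ ≤ 1 / 4 := by
    rw [div_le_div_iff₀ (by linarith) (by norm_num)] at *
    nlinarith
  -- the three test functions
  set ψA := trap δ (2 * δ) (1 - δ) 1 with hψA
  set ψB := trap (-2) (-1) (-δ) (-(δ / 2)) with hψB
  set ψC := trap (-(2 * δ)) (-δ) δ (2 * δ) with hψC
  have hAcont : Continuous ψA := trap_continuous _ _ _ _
  have hBcont : Continuous ψB := trap_continuous _ _ _ _
  have hCcont : Continuous ψC := trap_continuous _ _ _ _
  have hAsupp : ∀ t, t ∉ Icc δ 1 → ψA t = 0 :=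
    fun t ht => trap_eq_zero (by linarith) (by linarith) ht
  have hBsupp : ∀ t, t ∉ Icc (-2 : ℝ) (-(δ / 2)) → ψB t = 0 :=
    fun t ht => trap_eq_zero (by linarith) (by linarith) ht
  have hCsupp : ∀ t, t ∉ Icc (-(2 * δ)) (2 * δ) → ψC t = 0 :=
    fun t ht => trap_eq_zero (by linarith) (by linarith) ht
  have hAone : ∀ t, t ∈ Icc (2 * δ) (1 - δ) → ψA t = 1 :=
    fun t ht => trap_eq_one (by linarith) (by linarith) ht
  have hBone : ∀ t, t ∈ Icc (-1 : ℝ) (-δ) → ψB t = 1 :=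
    fun t ht => trap_eq_one (by linarith) (by linarith) ht
  have hCone : ∀ t, t ∈ Icc (-δ) δ → ψC t = 1 :=
    fun t ht => trap_eq_one (by linarith) (by linarith) ht
  have hAcs : HasCompactSupport ψA := HasCompactSupport.intro isCompact_Icc hAsupp
  have hBcs : HasCompactSupport ψB := HasCompactSupport.intro isCompact_Icc hBsupp
  have hCcs : HasCompactSupport ψC := HasCompactSupport.intro isCompact_Icc hCsupp
  rintro ⟨-, -, r, c, hrpos, -, hr0, hcpos, hw⟩
  have hwA := hw ψA hAcont hAcs
  have hwB := hw ψB hBcont hBcs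
  have hwC := hw ψC hCcont hCcs
  -- eventual inequality between the integrals
  have hev : ∀ᶠ i in atTop,
      c₁ * (∫ t, ψA t ∂(blowupR μ x (r i) (c i))) ≤
        c₂ * ((∫ t, ψB t ∂(blowupR μ x (r i) (c i))) +
          (∫ t, ψC t ∂(blowupR μ x (r i) (c i)))) := by
    filter_upwards [hr0.eventually (gt_mem_nhds hr₀)] with i hi
    have hri : 0 < r i := hrpos i
    have hrile : r i ≤ r₀ := hi.le
    rw [integral_blowup μ (hcpos i) ψA hAcont, integral_blowup μ (hcpos i) ψB hBcont,
      integral_blowup μ (hcpos i) ψC hCcont]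
    set R := r i
    -- finiteness facts
    have hfin : ∀ u v : ℝ, μ (Ioc u v) ≠ ⊤ := by
      intro u v
      refine ne_of_lt (lt_of_le_of_lt (measure_mono Ioc_subset_Icc_self) ?_)
      exact IsCompact.measure_lt_top isCompact_Icc
    -- A-bound
    have hA1 : (∫ y, ψA ((y - x) / R) ∂μ) ≤ c₂ * R := by
      calc (∫ y, ψA ((y - x) / R) ∂μ)
          ≤ (μ (Icc (x + δ * R) (x + 1 * R))).toReal :=
            scaled_int_le μ hri hAcont (trap_nonneg _ _ _ _) (trap_le_one _ _ _ _) hAsupp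
        _ ≤ (μ (Ioc x (x + R))).toReal := by
            apply ENNReal.toReal_mono (hfin _ _)
            apply measure_mono
            intro y hy
            constructor
            · nlinarith [hy.1]
            · nlinarith [hy.2]
        _ ≤ c₂ * R := hR R hri hrile
    -- B and C lower bounds
    have hB1 : (μ (Ioc (x - R) (x - δ * R))).toReal ≤ ∫ y, ψB ((y - x) / R) ∂μ := by
      calc (μ (Ioc (x - R) (x - δ * R))).toReal
          ≤ (μ (Icc (x + (-1) * R) (x + (-δ) * R))).toReal := by
            apply ENNReal.toReal_mono (IsCompact.measure_lt_top isCompact_Icc).ne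
            apply measure_mono
            intro y hy
            constructor
            · nlinarith [hy.1]
            · nlinarith [hy.2]
        _ ≤ ∫ y, ψB ((y - x) / R) ∂μ :=
            scaled_measure_le_int μ hri hBcont (trap_nonneg _ _ _ _) hBone hBsupp
    have hC1 : (μ (Ioc (x - δ * R) x)).toReal ≤ ∫ y, ψC ((y - x) / R) ∂μ := by
      calc (μ (Ioc (x - δ * R) x)).toReal
          ≤ (μ (Icc (x + (-δ) * R) (x + δ * R))).toReal := by
            apply ENNReal.toReal_mono (IsCompact.measure_lt_top isCompact_Icc).ne
            apply measure_mono
            intro y hy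
            constructor
            · nlinarith [hy.1]
            · nlinarith [hy.2]
        _ ≤ ∫ y, ψC ((y - x) / R) ∂μ :=
            scaled_measure_le_int μ hri hCcont (trap_nonneg _ _ _ _) hCone hCsupp
    -- split the left interval
    have hsplit : (μ (Ioc (x - R) x)).toReal ≤
        (μ (Ioc (x - R) (x - δ * R))).toReal + (μ (Ioc (x - δ * R) x)).toReal := by
      have hu : Ioc (x - R) (x - δ * R) ∪ Ioc (x - δ * R) x = Ioc (x - R) x :=
        Ioc_union_Ioc_eq_Ioc (by nlinarith) (by nlinarith)
      calc (μ (Ioc (x - R) x)).toReal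
          ≤ (μ (Ioc (x - R) (x - δ * R)) + μ (Ioc (x - δ * R) x)).toReal := by
            apply ENNReal.toReal_mono
            · exact ENNReal.add_ne_top.2 ⟨hfin _ _, hfin _ _⟩
            · rw [← hu]; exact measure_union_le _ _
        _ = _ := ENNReal.toReal_add (hfin _ _) (hfin _ _)
    have hLB : c₁ * R ≤ (∫ y, ψB ((y - x) / R) ∂μ) + ∫ y, ψC ((y - x) / R) ∂μ := by
      calc c₁ * R ≤ (μ (Ioc (x - R) x)).toReal := hL R hri hrile
        _ ≤ _ := le_trans hsplit (add_le_add hB1 hC1)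
    have hcip : 0 < c i := hcpos i
    nlinarith [mul_le_mul_of_nonneg_left hA1 (mul_pos hcip hc₁).le,
      mul_le_mul_of_nonneg_left hLB (mul_pos hcip hc₂).le]
  -- pass to the limit
  have hlim : c₁ * (∫ t, ψA t ∂heaviside) ≤
      c₂ * ((∫ t, ψB t ∂heaviside) + ∫ t, ψC t ∂heaviside) := by
    refine le_of_tendsto_of_tendsto (hwA.const_mul c₁) (((hwB.add hwC).const_mul c₂)) hev
  -- numeric bounds on the limit integrals
  have hTA : 1 - 3 * δ ≤ ∫ t, ψA t ∂heaviside := by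
    have := measure_le_int heaviside hAcont (trap_nonneg _ _ _ _) hAone hAsupp
    rw [heaviside_Icc (by linarith)] at this
    rw [ENNReal.toReal_ofReal (by linarith)] at this
    calc (1 : ℝ) - 3 * δ = 1 - δ - 2 * δ := by ring
      _ ≤ _ := this
  have hTB : (∫ t, ψB t ∂heaviside) ≤ 0 := by
    have := int_le_measure heaviside hBcont (trap_nonneg _ _ _ _) (trap_le_one _ _ _ _) hBsupp
    rw [heaviside_Icc_neg (by linarith)] at this
    simpa using this
  have hTC : (∫ t, ψC t ∂heaviside) ≤ 2 * δ := by
    have := int_le_measure heaviside hCcont (trap_nonneg _ _ _ _) (trap_le_one _ _ _ _) hCsupp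
    rw [heaviside_Icc_cross (by linarith)] at this
    rw [ENNReal.toReal_ofReal (by linarith)] at this
    exact this
  nlinarith
/-- Existence of a maximum for `F - A·id` on a compact interval, where `F` is monotone and
right-continuous (in a sequential sense). -/
lemma exists_max_of_monotone_rc {F : ℝ → ℝ} (hF : Monotone F)
    (hrc : ∀ t y : ℝ, F t < y → ∃ η > 0, F (t + η) < y) (A : ℝ) {u v : ℝ} (huv : u ≤ v) :
    ∃ z ∈ Icc u v, ∀ s ∈ Icc u v, F s - A * s ≤ F z - A * z := by
  set h : ℝ → ℝ := fun s => F s - A * s with hh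
  have hne : (h '' Icc u v).Nonempty := ⟨h u, u, ⟨le_refl u, huv⟩, rfl⟩
  have habs : ∀ s ∈ Icc u v, -(A * s) ≤ |A| * (|u| + |v|) := by
    intro s hs
    have h1 : |s| ≤ |u| + |v| := by
      rw [abs_le]
      constructor
      · have := neg_abs_le u; have := hs.1; have := abs_nonneg v; linarith
      · have := le_abs_self v; have := hs.2; have := abs_nonneg u; linarith
    calc -(A * s) ≤ |A * s| := neg_le_abs _
      _ = |A| * |s| := abs_mul _ _
      _ ≤ |A| * (|u| + |v|) := by
          exact mul_le_mul_of_nonneg_left h1 (abs_nonneg A)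
  have hbdd : BddAbove (h '' Icc u v) := by
    refine ⟨F v + |A| * (|u| + |v|), ?_⟩
    rintro - ⟨s, hs, rfl⟩
    have h2 : F s ≤ F v := hF hs.2
    have := habs s hs
    simp only [hh]
    linarith
  set S := sSup (h '' Icc u v) with hS
  have hSub : ∀ s ∈ Icc u v, h s ≤ S := fun s hs => le_csSup hbdd ⟨s, hs, rfl⟩
  have hseq : ∀ n : ℕ, ∃ s, s ∈ Icc u v ∧ S - 1 / (n + 1) < h s := by
    intro n
    have hlt : S - 1 / ((n : ℝ) + 1) < S := by
      have : (0 : ℝ) < 1 / ((n : ℝ) + 1) := by positivity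
      linarith
    obtain ⟨y, hy, hylt⟩ := exists_lt_of_lt_csSup hne hlt
    obtain ⟨s, hs, rfl⟩ := hy
    exact ⟨s, hs, hylt⟩
  choose s hsmem hslt using hseq
  obtain ⟨z, hz, φ, hφ, hconv⟩ := (isCompact_Icc (a := u) (b := v)).tendsto_subseq hsmem
  refine ⟨z, hz, fun w hw => le_trans (hSub w hw) ?_⟩
  by_contra hSz
  push_neg at hSz
  set ε := (S - h z) / 3 with hε
  have hεpos : 0 < ε := by simp only [hε]; linarith
  obtain ⟨η, hη, hFη⟩ := hrc z (F z + ε) (lt_add_of_pos_right _ hεpos)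
  set γ := min η (ε / (|A| + 1)) with hγ
  have hγpos : 0 < γ := lt_min hη (by positivity)
  have hnb : ∀ w, |w - z| < γ → h w ≤ S - ε := by
    intro w hwz
    have habs' := abs_lt.1 hwz
    have hγ1 : γ ≤ η := min_le_left _ _
    have hγ2 : γ ≤ ε / (|A| + 1) := min_le_right _ _
    have hw1 : w ≤ z + η := by linarith [habs'.2]
    have hFw : F w < F z + ε := lt_of_le_of_lt (hF hw1) hFη
    have hAw : -(A * w) ≤ -(A * z) + ε := by
      have h1 : A * (z - w) ≤ |A| * |z - w| := by
        calc A * (z - w) ≤ |A * (z - w)| := le_abs_self _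
          _ = |A| * |z - w| := abs_mul _ _
      have h2 : |z - w| ≤ γ := by
        rw [abs_sub_comm]; exact hwz.le
      have h3 : |A| * |z - w| ≤ |A| * γ :=
        mul_le_mul_of_nonneg_left h2 (abs_nonneg A)
      have h4 : |A| * γ ≤ ε := by
        have h5 : |A| * γ ≤ |A| * (ε / (|A| + 1)) :=
          mul_le_mul_of_nonneg_left hγ2 (abs_nonneg A)
        have h6 : |A| * (ε / (|A| + 1)) ≤ ε := by
          rw [mul_div_assoc'] at *
          rw [div_le_iff₀ (by positivity)]
          have := abs_nonneg A
          nlinarith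
        linarith
      nlinarith
    have : h w < h z + 2 * ε := by
      simp only [hh]
      linarith
    simp only [hε] at *
    linarith
  have h1 : ∀ᶠ n in atTop, |s (φ n) - z| < γ := by
    have := hconv.eventually (Metric.ball_mem_nhds z hγpos)
    filter_upwards [this] with n hn
    rw [Real.dist_eq] at hn
    exact hn
  have h2 : ∀ᶠ n : ℕ in atTop, 1 / ((n : ℝ) + 1) < ε :=
    tendsto_one_div_add_atTop_nhds_zero_nat.eventually (gt_mem_nhds hεpos)
  obtain ⟨n, hn1, hn2⟩ := (h1.and h2).exists
  have h3 : S - 1 / ((φ n : ℝ) + 1) < h (s (φ n)) := hslt (φ n)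
  have h4 : h (s (φ n)) ≤ S - ε := hnb _ hn1
  have h5 : 1 / ((φ n : ℝ) + 1) ≤ 1 / ((n : ℝ) + 1) := by
    apply one_div_le_one_div_of_le (by positivity)
    have : (n : ℝ) ≤ (φ n : ℝ) := by exact_mod_cast hφ.le_apply
    linarith
  have h6 : 1 / ((φ n : ℝ) + 1) < ε := lt_of_le_of_lt h5 hn2
  have h7 : S - 1 / ((φ n : ℝ) + 1) < S - ε := lt_of_lt_of_le h3 h4
  linarith [h6, h7]
section Fprops
variable (μ : Measure ℝ) [IsLocallyFiniteMeasure μ] (base cap : ℝ)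

/-- Cumulative distribution function of `μ`, capped at `cap`. -/
def cdf : ℝ → ℝ := fun t => (μ (Ioc base (min t cap))).toReal

lemma ioc_fin (u v : ℝ) : μ (Ioc u v) ≠ ⊤ :=
  ne_of_lt (lt_of_le_of_lt (measure_mono Ioc_subset_Icc_self)
    (IsCompact.measure_lt_top isCompact_Icc))

lemma cdf_mono : Monotone (cdf μ base cap) := by
  intro t₁ t₂ h
  apply ENNReal.toReal_mono (ioc_fin μ _ _)
  apply measure_mono
  apply Ioc_subset_Ioc_right
  exact min_le_min_right _ h

lemma cdf_eq {t : ℝ} (ht : t ≤ cap) : cdf μ base cap t = (μ (Ioc base t)).toReal := by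
  unfold cdf
  rw [min_eq_left ht]

lemma cdf_rc : ∀ t y : ℝ, cdf μ base cap t < y → ∃ η > 0, cdf μ base cap (t + η) < y := by
  intro t y hty
  by_cases ht : cap ≤ t
  · refine ⟨1, one_pos, ?_⟩
    have h1 : min (t + 1) cap = cap := min_eq_right (by linarith)
    have h2 : min t cap = cap := min_eq_right ht
    unfold cdf at *
    rw [h1, ← h2]
    exact hty
  · push_neg at ht
    set tn : ℕ → ℝ := fun n => t + (cap - t) / (n + 1) with htn
    have htn_le : ∀ n : ℕ, tn n ≤ cap := by
      intro n
      have h1 : (cap - t) / ((n : ℝ) + 1) ≤ cap - t := by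
        apply div_le_self (by linarith)
        have : (0:ℝ) ≤ (n:ℝ) := Nat.cast_nonneg n
        linarith
      simp only [htn]
      linarith
    have htn_gt : ∀ n : ℕ, t < tn n := by
      intro n
      have : (0:ℝ) < (cap - t) / ((n : ℝ) + 1) := div_pos (by linarith) (by positivity)
      simp only [htn]
      linarith
    have hanti : Antitone (fun n : ℕ => Ioc base (tn n)) := by
      intro m n hmn
      apply Ioc_subset_Ioc_right
      simp only [htn]
      have h1 : ((m : ℝ) + 1) ≤ ((n : ℝ) + 1) := by
        have : (m:ℝ) ≤ (n:ℝ) := Nat.cast_le.2 hmn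
        linarith
      have h2 := div_le_div_of_nonneg_left (by linarith : (0:ℝ) ≤ cap - t)
        (by positivity : (0:ℝ) < (m:ℝ)+1) h1
      linarith
    have hiInter : ⋂ n : ℕ, Ioc base (tn n) = Ioc base t := by
      ext w
      simp only [mem_iInter, mem_Ioc]
      constructor
      · rintro hmem
        refine ⟨(hmem 0).1, ?_⟩
        have hlim : Tendsto tn atTop (𝓝 t) := by
          have h0 : Tendsto (fun n : ℕ => (cap - t) * (1 / ((n:ℝ) + 1))) atTop (𝓝 ((cap - t) * 0)) :=
            tendsto_const_nhds.mul tendsto_one_div_add_atTop_nhds_zero_nat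
        
          simp only [htn]
          have : (fun n : ℕ => t + (cap - t) / ((n:ℝ) + 1)) =
              fun n : ℕ => t + (cap - t) * (1 / ((n:ℝ) + 1)) := by
            funext n; rw [mul_one_div]
          rw [this]
          have h1 := (tendsto_const_nhds : Tendsto (fun _ : ℕ => t) atTop (𝓝 t)).add h0
          simpa using h1
        exact ge_of_tendsto hlim (Eventually.of_forall fun n => (hmem n).2)
      · rintro ⟨h1, h2⟩ 
        intro n
        exact ⟨h1, le_trans h2 (htn_gt n).le⟩
    have htand : Tendsto (fun n : ℕ => μ (Ioc base (tn n))) atTop (𝓝 (μ (Ioc base t))) := by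
      have := tendsto_measure_iInter_atTop (μ := μ)
        (fun n => (measurableSet_Ioc).nullMeasurableSet) hanti ⟨0, ioc_fin μ _ _⟩
      rw [hiInter] at this
      exact this
    have htoReal : Tendsto (fun n : ℕ => (μ (Ioc base (tn n))).toReal) atTop
        (𝓝 ((μ (Ioc base t)).toReal)) :=
      (ENNReal.tendsto_toReal (ioc_fin μ _ _)).comp htand
    have hy : (μ (Ioc base t)).toReal < y := by
      rw [cdf_eq μ base cap ht.le] at hty
      exact hty
    obtain ⟨n, hn⟩ := (htoReal.eventually (gt_mem_nhds hy)).exists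
    refine ⟨(cap - t) / ((n:ℝ) + 1), div_pos (by linarith) (by positivity), ?_⟩
    rw [cdf_eq μ base cap (htn_le n)]
    exact hn

lemma cdf_inc {u v : ℝ} (hbu : base ≤ u) (huv : u ≤ v) (hvc : v ≤ cap) :
    (μ (Ioc u v)).toReal = cdf μ base cap v - cdf μ base cap u := by
  rw [cdf_eq μ base cap hvc, cdf_eq μ base cap (le_trans huv hvc)]
  have hu : μ (Ioc base v) = μ (Ioc base u) + μ (Ioc u v) := by
    rw [← Ioc_union_Ioc_eq_Ioc hbu huv]
    exact measure_union (Ioc_disjoint_Ioc_of_le le_rfl) measurableSet_Ioc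
  rw [hu, ENNReal.toReal_add (ioc_fin μ _ _) (ioc_fin μ _ _)]
  ring

end Fprops

end AuxiliaryLemmas

/-- if `μ` is a Radon measure on ℝ with non-empty support, then there is
`x ∈ spt μ` with `L ∉ Tan(μ,x)` or `L⁺ ∉ Tan(μ,x)`. -/
theorem stmt_6 (μ : Measure ℝ) (hRadon : IsLocallyFiniteMeasure μ)
    (hspt : (sptR μ).Nonempty) :
    ∃ x ∈ sptR μ,
      ¬ IsTangentMeasureR μ x volume ∨ ¬ IsTangentMeasureR μ x heaviside := by
  haveI := hRadon
  by_cases hP1 : ∃ z ∈ sptR μ, ∃ ρ : ℝ, 0 < ρ ∧ μ (Ioo (z - ρ) z) = 0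
  · obtain ⟨z, hz, ρ, hρ, hnull⟩ := hP1
    exact ⟨z, hz, Or.inl (notTan_volume_of_left_gap μ hRadon hρ hnull)⟩
  by_cases hP2 : ∃ z ∈ sptR μ, ∃ ρ : ℝ, 0 < ρ ∧ μ (Ioo z (z + ρ)) = 0
  · obtain ⟨z, hz, ρ, hρ, hnull⟩ := hP2
    exact ⟨z, hz, Or.inr (notTan_heaviside_of_right_gap μ hRadon hρ hnull)⟩
  push_neg at hP1 hP2
  obtain ⟨x₀, hx₀⟩ := hspt
  set base := x₀ - 2 with hbase
  set cap := x₀ + 2 with hcap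
  set F := cdf μ base cap with hFdef
  have hFmono := cdf_mono μ base cap
  have hFrc := cdf_rc μ base cap
  by_cases hcvx : ∀ u t v : ℝ, x₀ - 1 ≤ u → u ≤ t → t ≤ v → v ≤ x₀ + 1 →
      (F t - F u) * (v - u) ≤ (F v - F u) * (t - u)
  · -- convex case : work at x₀ itself
    refine ⟨x₀, hx₀, Or.inr ?_⟩
    have hρ : (0:ℝ) < 1/2 := by norm_num
    set D := F x₀ - F (x₀ - 1/2) with hD
    set E := F (x₀ + 1/2) - F x₀ with hE
    have hDeq : (μ (Ioc (x₀ - 1/2) x₀)).toReal = D :=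
      cdf_inc μ base cap (by rw [hbase]; linarith) (by linarith) (by rw [hcap]; linarith)
    have hEeq : (μ (Ioc x₀ (x₀ + 1/2))).toReal = E :=
      cdf_inc μ base cap (by rw [hbase]; linarith) (by linarith) (by rw [hcap]; linarith)
    have hDpos : 0 < D := by
      rw [← hDeq]
      apply ENNReal.toReal_pos _ (ioc_fin μ _ _)
      intro h0
      exact hP1 x₀ hx₀ (1/2) hρ (measure_mono_null Ioo_subset_Ioc_self h0)
    have hEpos : 0 < E := by
      rw [← hEeq]
      apply ENNReal.toReal_pos _ (ioc_fin μ _ _)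
      intro h0
      exact hP2 x₀ hx₀ (1/2) hρ (measure_mono_null Ioo_subset_Ioc_self h0)
    apply notTan_heaviside_main μ hRadon hρ (div_pos hDpos hρ) (div_pos hEpos hρ)
    · intro r hr hrρ
      have hkey := hcvx (x₀ - 1/2) (x₀ - r) x₀ (by linarith) (by linarith) (by linarith)
        (by linarith)
      have hIr : (μ (Ioc (x₀ - r) x₀)).toReal = F x₀ - F (x₀ - r) :=
        cdf_inc μ base cap (by rw [hbase]; linarith) (by linarith) (by rw [hcap]; linarith)
      rw [hIr]
      have hc : (D / (1/2)) * (1/2) = D := div_mul_cancel₀ _ (by norm_num)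
      nlinarith [hkey, hc]
    · intro r hr hrρ
      have hkey := hcvx x₀ (x₀ + r) (x₀ + 1/2) (by linarith) (by linarith) (by linarith)
        (by linarith)
      have hIr : (μ (Ioc x₀ (x₀ + r))).toReal = F (x₀ + r) - F x₀ :=
        cdf_inc μ base cap (by rw [hbase]; linarith) (by linarith) (by rw [hcap]; linarith)
      rw [hIr]
      have hc : (E / (1/2)) * (1/2) = E := div_mul_cancel₀ _ (by norm_num)
      nlinarith [hkey, hc]
  · -- non-convex case : there is a "concave point" z
    push_neg at hcvx
    obtain ⟨u, t, v, hau, hut, htv, hvb, hgt⟩ := hcvx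
    have hut' : u < t := by
      rcases lt_or_eq_of_le hut with h | h
      · exact h
      · exfalso; rw [← h] at hgt; nlinarith
    have htv' : t < v := by
      rcases lt_or_eq_of_le htv with h | h
      · exact h
      · exfalso; rw [h] at hgt; nlinarith
    have hvu : 0 < v - u := by linarith
    set A := (F v - F u) / (v - u) with hA
    have hAe : A * (v - u) = F v - F u := div_mul_cancel₀ _ (ne_of_gt hvu)
    have hFtv : F t ≤ F v := hFmono (le_of_lt htv')
    have h2 : (F t - F u) * (v - u) ≤ (F v - F u) * (v - u) :=
      mul_le_mul_of_nonneg_right (by linarith) (le_of_lt hvu)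
    have h3 : (F v - F u) * (t - u) < (F v - F u) * (v - u) := lt_of_lt_of_le hgt h2
    have h4 : 0 < F v - F u := by nlinarith
    have hApos : 0 < A := div_pos h4 hvu
    obtain ⟨z, hzm, hzmax⟩ :=
      exists_max_of_monotone_rc hFmono hFrc A (le_of_lt (lt_trans hut' htv'))
    have hz_t := hzmax t ⟨hut, le_of_lt htv'⟩
    have hq : (F t - F u - A * (t - u)) * (v - u) > 0 := by nlinarith
    have hu_lt_t : F u - A * u < F t - A * t := by nlinarith
    have h5 : A * v - A * u = F v - F u := by rw [← hAe]; ring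
    have hv_eq : F v - A * v = F u - A * u := by linarith
    have hzu : u < z := by
      rcases lt_or_eq_of_le hzm.1 with h | h
      · exact h
      · exfalso; rw [← h] at hz_t; linarith
    have hzv : z < v := by
      rcases lt_or_eq_of_le hzm.2 with h | h
      · exact h
      · exfalso; rw [h] at hz_t; linarith
    set r₀ := min (z - u) (v - z) with hr₀def
    have hr₀ : 0 < r₀ := lt_min (by linarith) (by linarith)
    have hbz : base ≤ u := by rw [hbase]; linarith
    have hzc : v ≤ cap := by rw [hcap]; linarith
    have hLz : ∀ r, 0 < r → r ≤ r₀ → A * r ≤ (μ (Ioc (z - r) z)).toReal := by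
      intro r hr hrr
      have hm1 : r₀ ≤ z - u := min_le_left _ _
      have h1 : z - r ∈ Icc u v := ⟨by linarith, by linarith [hzm.2]⟩
      have h2' := hzmax (z - r) h1
      have hinc : (μ (Ioc (z - r) z)).toReal = F z - F (z - r) :=
        cdf_inc μ base cap (by linarith [h1.1]) (by linarith) (by linarith [hzm.2])
      rw [hinc]
      have h3' : A * (z - r) = A * z - A * r := by ring
      linarith [h2', h3']
    have hRz : ∀ r, 0 < r → r ≤ r₀ → (μ (Ioc z (z + r))).toReal ≤ A * r := by
      intro r hr hrr
      have hm2 : r₀ ≤ v - z := min_le_right _ _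
      have h1 : z + r ∈ Icc u v := ⟨by linarith [hzm.1], by linarith⟩
      have h2' := hzmax (z + r) h1
      have hinc : (μ (Ioc z (z + r))).toReal = F (z + r) - F z :=
        cdf_inc μ base cap (by linarith [hzm.1]) (by linarith) (by linarith [h1.2])
      rw [hinc]
      have h3' : A * (z + r) = A * z + A * r := by ring
      linarith [h2', h3']
    have hzspt : z ∈ sptR μ := by
      intro ρ hρ
      rw [Real.closedBall_eq_Icc]
      set r' := min ρ r₀ with hr'def
      have hr' : 0 < r' := lt_min hρ hr₀
      have h1 := hLz r' hr' (min_le_right _ _)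
      have h2' : (0:ℝ) < (μ (Ioc (z - r') z)).toReal :=
        lt_of_lt_of_le (mul_pos hApos hr') h1
      have h3' : μ (Ioc (z - r') z) ≠ 0 := by
        intro h0
        rw [h0] at h2'
        simp at h2'
      have h4' : 0 < μ (Ioc (z - r') z) := pos_iff_ne_zero.2 h3'
      refine lt_of_lt_of_le h4' (measure_mono ?_)
      intro w hw
      have hm : r' ≤ ρ := min_le_left _ _
      exact ⟨by linarith [hw.1], by linarith [hw.2]⟩
    exact ⟨z, hzspt, Or.inr (notTan_heaviside_main μ hRadon hr₀ hApos hApos hLz hRz)⟩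
end
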